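/- Let t : ℝ² → ℝ² be defined by t(p,s) = (1/(s·√(p²+s²)), 1/(p·√(p²+s²))). For all real numbers p > 0, s > 0 and every k with 0 < k ≤ 1, the product p·s is at least k if and only if the Euclidean distance of t(p,s) from the origin is at most 1/k. -/

import Mathlib

/-- The transformation `t(p,s) = (1/(s·√(p²+s²)), 1/(p·√(p²+s²)))`. -/
noncomputable def probSimTransform (p s : ℝ) : ℝ × ℝ :=
  (1 / (s * Real.sqrt (p ^ 2 + s ^ 2)), 1 / (p * Real.sqrt (p ^ 2 + s ^ 2)))

/-- The Euclidean distance of a point `(x, y) ∈ ℝ²` from the origin is `√(x² + y²)`. -/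
noncomputable def euclNorm2 (v : ℝ × ℝ) : ℝ :=
  Real.sqrt (v.1 ^ 2 + v.2 ^ 2)

theorem prod_ge_iff_transform_dist_le (p s k : ℝ) (hp : 0 < p) (hs : 0 < s)
    (hk0 : 0 < k) (hk1 : k ≤ 1) :
    k ≤ p * s ↔ euclNorm2 (probSimTransform p s) ≤ 1 / k := by
  have hq : (0:ℝ) < p ^ 2 + s ^ 2 := by positivity
  have hsq : Real.sqrt (p ^ 2 + s ^ 2) ^ 2 = p ^ 2 + s ^ 2 :=
    Real.sq_sqrt hq.le
  have key : euclNorm2 (probSimTransform p s) = 1 / (p * s) := by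
    unfold euclNorm2 probSimTransform
    have : (1 / (s * Real.sqrt (p ^ 2 + s ^ 2))) ^ 2
        + (1 / (p * Real.sqrt (p ^ 2 + s ^ 2))) ^ 2 = (1 / (p * s)) ^ 2 := by
      field_simp
      rw [hsq]
    rw [this, Real.sqrt_sq (by positivity)]
  rw [key, div_le_div_iff₀ (by positivity) hk0]
  constructor <;> intro h <;> nlinarith
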